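/- The Hankel determinant det(a_{i+j})_{i,j=0}^{n-1} equals (-1)^(n choose 2) for all n ≥ 1. -/

import Mathlib

open Classical in
noncomputable def catMod2 (n : ℕ) : ℤ := if ∃ k : ℕ, n + 1 = 2 ^ k then 1 else 0

lemma catMod2_one {t k : ℕ} (h : t + 1 = 2 ^ k) : catMod2 t = 1 := by
  rw [catMod2, if_pos ⟨k, h⟩]

lemma catMod2_zero {t a : ℕ} (h1 : 2 ^ a < t + 1) (h2 : t + 1 < 2 ^ (a + 1)) :
    catMod2 t = 0 := by
  rw [catMod2, if_neg]
  rintro ⟨k, hk⟩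
  rcases le_or_gt k a with h | h
  · exact absurd (hk ▸ Nat.pow_le_pow_right (by norm_num) h) (by omega)
  · exact absurd (hk ▸ Nat.pow_le_pow_right (by norm_num) h) (by omega)

def Jmat (r : ℕ) : Matrix (Fin r) (Fin r) ℤ :=
  Matrix.of fun i j => if (i : ℕ) + (j : ℕ) = r - 1 then 1 else 0

lemma choose_two_add (a b : ℕ) : (a + b).choose 2 = a.choose 2 + a * b + b.choose 2 := by
  induction a with
  | zero => simp
  | succ a ih =>
    have h1 : (a + b + 1).choose 2 = (a + b).choose 1 + (a + b).choose 2 :=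
      Nat.choose_succ_succ _ _
    have h2 : (a + 1).choose 2 = a.choose 1 + a.choose 2 := Nat.choose_succ_succ _ _
    simp only [Nat.choose_one_right] at h1 h2
    have : a + 1 + b = a + b + 1 := by ring
    rw [this, h1, h2]
    have hb : (a + 1) * b = a * b + b := by ring
    rw [hb]
    omega

lemma det_Jmat (r : ℕ) : (Jmat r).det = (-1 : ℤ) ^ (r.choose 2) := by
  induction r with
  | zero => simp [Jmat, Matrix.det_fin_zero]
  | succ r ih =>
    rw [Matrix.det_succ_row_zero]
    rw [Fintype.sum_eq_single (Fin.last r)]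
    · have hminor : (Jmat (r + 1)).submatrix Fin.succ (Fin.last r).succAbove = Jmat r := by
        ext i j
        simp only [Matrix.submatrix_apply, Fin.succAbove_last, Jmat, Matrix.of_apply,
          Fin.val_succ, Fin.coe_castSucc]
        have hi := i.isLt
        have hj := j.isLt
        by_cases h : (i : ℕ) + j = r - 1
        · rw [if_pos (by omega), if_pos h]
        · rw [if_neg (by omega), if_neg h]
      have hentry : Jmat (r + 1) 0 (Fin.last r) = 1 := by
        simp [Jmat]
      rw [hminor, hentry, ih]
      have : (r + 1).choose 2 = r + r.choose 2 := by
        rw [Nat.choose_succ_succ, Nat.choose_one_right]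
      rw [this, pow_add]
      simp [Fin.val_last]
    · intro j hj
      have : Jmat (r + 1) 0 j = 0 := by
        have hjr : (j : ℕ) ≠ r := fun h => hj (Fin.ext (by simp [h, Fin.val_last]))
        have := j.isLt
        simp only [Jmat, Matrix.of_apply, Fin.val_zero]
        split_ifs <;> omega
      rw [this]
      ring

lemma Jmat_mul_Jmat (r : ℕ) : Jmat r * Jmat r = 1 := by
  ext i j
  rw [Matrix.mul_apply]
  have hi := i.isLt
  rw [Fintype.sum_eq_single (⟨r - 1 - i, by omega⟩ : Fin r)]
  · simp only [Jmat, Matrix.of_apply]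
    rw [if_pos (by omega)]
    rw [Matrix.one_apply]
    by_cases h : i = j
    · subst h; rw [if_pos (by omega), if_pos rfl]; ring
    · have : (i : ℕ) ≠ j := fun hc => h (Fin.ext hc)
      rw [if_neg (by omega), if_neg h]; ring
  · intro k hk
    have : (k : ℕ) ≠ r - 1 - i := fun hc => hk (Fin.ext (by simp [hc]))
    simp only [Jmat, Matrix.of_apply]
    rw [if_neg (by omega)]
    ring

theorem key (n : ℕ) :
    Matrix.det (Matrix.of fun i j : Fin n => catMod2 ((i : ℕ) + j)) =
      (-1 : ℤ) ^ (n.choose 2) := by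
  induction n using Nat.strong_induction_on with
  | _ n ih =>
  by_cases h0 : n = 0
  · subst h0; simp [Matrix.det_fin_zero]
  by_cases h1 : n = 1
  · subst h1
    rw [Matrix.det_fin_one]
    simp only [Matrix.of_apply]
    norm_num [catMod2_one (t := 0) (k := 0) rfl]
  -- now n ≥ 2
  have hn2 : 2 ≤ n := by omega
  have hn1 : n - 1 ≠ 0 := by omega
  set m := Nat.log2 (n - 1) with hm
  have hm1 : 2 ^ m ≤ n - 1 := Nat.log2_self_le hn1
  have hm2 : n - 1 < 2 ^ (m + 1) := Nat.lt_log2_self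
  set p := 2 ^ m with hp
  have h2p : 2 ^ (m + 1) = 2 * p := by rw [hp, pow_succ]; ring
  have h4p : 2 ^ (m + 1 + 1) = 4 * p := by rw [pow_succ, h2p]; ring
  have hp1 : 1 ≤ p := Nat.one_le_two_pow
  set r := n - p with hr
  set s := 2 * p - n with hs
  have hr1 : 1 ≤ r := by omega
  have hrp : r ≤ p := by omega
  have hsn : s + (r + r) = n := by omega
  have hs_lt : s < n := by omega
  -- the equivalence
  let e : (Fin s ⊕ (Fin r ⊕ Fin r)) ≃ Fin n :=
    ((Equiv.refl (Fin s)).sumCongr finSumFinEquiv).trans (finSumFinEquiv.trans (finCongr hsn))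
  have he1 : ∀ x : Fin s, ((e (Sum.inl x)) : ℕ) = x := by
    intro x; simp [e]
  have he2 : ∀ y : Fin r, ((e (Sum.inr (Sum.inl y))) : ℕ) = s + y := by
    intro y; simp [e]
  have he3 : ∀ z : Fin r, ((e (Sum.inr (Sum.inr z))) : ℕ) = s + (r + z) := by
    intro z; simp [e]; omega
  rw [← Matrix.det_submatrix_equiv_self e]
  set A := Matrix.of fun i j : Fin n => catMod2 ((i : ℕ) + j) with hA
  set M := A.submatrix e e with hM
  have hMapp : ∀ q q', M q q' = catMod2 (((e q) : ℕ) + ((e q') : ℕ)) := by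
    intro q q'; rw [hM, Matrix.submatrix_apply, hA, Matrix.of_apply]
  -- blocks
  set E := Matrix.of (fun y y' : Fin r => catMod2 ((s + (y : ℕ)) + (s + (y' : ℕ)))) with hE
  have hW : M.toBlocks₂₂ = Matrix.fromBlocks E (Jmat r) (Jmat r) 0 := by
    ext q q'
    cases q with
    | inl y =>
      cases q' with
      | inl y' =>
        rw [Matrix.toBlocks₂₂]
        simp only [Matrix.of_apply, Matrix.fromBlocks_apply₁₁]
        rw [hMapp, he2, he2, hE, Matrix.of_apply]
      | inr z =>
        rw [Matrix.toBlocks₂₂]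
        simp only [Matrix.of_apply, Matrix.fromBlocks_apply₁₂]
        rw [hMapp, he2, he3]
        have hy := y.isLt
        have hz := z.isLt
        show catMod2 _ = Jmat r y z
        rw [Jmat, Matrix.of_apply]
        by_cases hcase : (y : ℕ) + z = r - 1
        · rw [if_pos hcase]
          exact catMod2_one (k := m + 1) (by omega)
        · rw [if_neg hcase]
          rcases lt_or_gt_of_ne hcase with hlt | hgt
          · exact catMod2_zero (a := m) (by omega) (by omega)
          · exact catMod2_zero (a := m + 1) (by omega) (by omega)
    | inr z =>
      cases q' with
      | inl y' =>
        rw [Matrix.toBlocks₂₂]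
        simp only [Matrix.of_apply, Matrix.fromBlocks_apply₂₁]
        rw [hMapp, he3, he2]
        have hy := y'.isLt
        have hz := z.isLt
        show catMod2 _ = Jmat r z y'
        rw [Jmat, Matrix.of_apply]
        by_cases hcase : (z : ℕ) + y' = r - 1
        · rw [if_pos hcase]
          exact catMod2_one (k := m + 1) (by omega)
        · rw [if_neg hcase]
          rcases lt_or_gt_of_ne hcase with hlt | hgt
          · exact catMod2_zero (a := m) (by omega) (by omega)
          · exact catMod2_zero (a := m + 1) (by omega) (by omega)
      | inr z' =>
        rw [Matrix.toBlocks₂₂]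
        simp only [Matrix.of_apply, Matrix.fromBlocks_apply₂₂, Matrix.zero_apply]
        rw [hMapp, he3, he3]
        have hz := z.isLt
        have hz' := z'.isLt
        exact catMod2_zero (a := m + 1) (by omega) (by omega)
  have hA11 : M.toBlocks₁₁ = Matrix.of (fun i j : Fin s => catMod2 ((i : ℕ) + j)) := by
    ext x x'
    rw [Matrix.toBlocks₁₁]
    simp only [Matrix.of_apply]
    rw [hMapp, he1, he1]
  have hA12z : ∀ (x : Fin s) (z : Fin r), M.toBlocks₁₂ x (Sum.inr z) = 0 := by
    intro x z
    rw [Matrix.toBlocks₁₂]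
    simp only [Matrix.of_apply]
    rw [hMapp, he1, he3]
    have hx := x.isLt
    have hz := z.isLt
    exact catMod2_zero (a := m) (by omega) (by omega)
  have hA21z : ∀ (z : Fin r) (x : Fin s), M.toBlocks₂₁ (Sum.inr z) x = 0 := by
    intro z x
    rw [Matrix.toBlocks₂₁]
    simp only [Matrix.of_apply]
    rw [hMapp, he3, he1]
    have hx := x.isLt
    have hz := z.isLt
    exact catMod2_zero (a := m) (by omega) (by omega)
  -- inverse of W
  set J := Jmat r with hJ
  have hJJ : J * J = 1 := Jmat_mul_Jmat r
  set W := Matrix.fromBlocks E J J (0 : Matrix (Fin r) (Fin r) ℤ) with hWdef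
  set V := Matrix.fromBlocks (0 : Matrix (Fin r) (Fin r) ℤ) J J (-(J * E * J)) with hV
  have hWV : W * V = 1 := by
    rw [hWdef, hV, Matrix.fromBlocks_multiply]
    have h12 : E * J + J * -(J * E * J) = 0 := by
      rw [Matrix.mul_neg, ← Matrix.mul_assoc, ← Matrix.mul_assoc, hJJ, Matrix.one_mul]
      simp [Matrix.mul_assoc]
    rw [h12]
    simp [hJJ, ← Matrix.fromBlocks_one]
  have hVW : V * W = 1 := by
    rw [hWdef, hV, Matrix.fromBlocks_multiply]
    have h21 : J * E + -(J * E * J) * J = 0 := by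
      rw [Matrix.neg_mul, Matrix.mul_assoc, Matrix.mul_assoc, hJJ]
      simp [Matrix.mul_assoc]
    rw [h21]
    simp [hJJ, ← Matrix.fromBlocks_one]
  haveI hInv : Invertible W := ⟨V, hVW, hWV⟩
  have hinvOf : ⅟W = V := invOf_eq_right_inv hWV
  rw [← Matrix.fromBlocks_toBlocks M, hW, hA11, Matrix.det_fromBlocks₂₂]
  -- Schur correction vanishes
  have hcorr : M.toBlocks₁₂ * ⅟W * M.toBlocks₂₁ = 0 := by
    rw [hinvOf]
    have hBV : ∀ (x : Fin s) (y : Fin r), (M.toBlocks₁₂ * V) x (Sum.inl y) = 0 := by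
      intro x y
      rw [Matrix.mul_apply]
      apply Finset.sum_eq_zero
      rintro (y' | z) -
      · have : V (Sum.inl y') (Sum.inl y) = (0 : ℤ) := by
          rw [hV]; simp
        rw [this, mul_zero]
      · rw [hA12z, zero_mul]
    ext x x'
    rw [Matrix.mul_apply, Matrix.zero_apply]
    apply Finset.sum_eq_zero
    rintro (y | z) -
    · rw [hBV, zero_mul]
    · rw [hA21z, mul_zero]
  rw [hcorr, sub_zero, ih s hs_lt]
  -- det W
  have hdetW : W.det = (-1 : ℤ) ^ ((r + r).choose 2) := by
    have hfactor : W = Matrix.fromBlocks 1 (E * J) 0 1 *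
        Matrix.fromBlocks (0 : Matrix (Fin r) (Fin r) ℤ) J J 0 := by
      rw [Matrix.fromBlocks_multiply]
      rw [Matrix.mul_assoc, hJJ]
      simp
      exact hWdef
    have hJ2r : Matrix.fromBlocks (0 : Matrix (Fin r) (Fin r) ℤ) J J 0 =
        (Jmat (r + r)).submatrix finSumFinEquiv finSumFinEquiv := by
      ext q q'
      cases q with
      | inl i =>
        cases q' with
        | inl j =>
          have hi := i.isLt; have hj := j.isLt
          simp only [Matrix.fromBlocks_apply₁₁, Matrix.zero_apply, Matrix.submatrix_apply,
            finSumFinEquiv_apply_left, Jmat, Matrix.of_apply, Fin.coe_castAdd]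
          rw [if_neg (by omega)]
        | inr j =>
          have hi := i.isLt; have hj := j.isLt
          simp only [Matrix.fromBlocks_apply₁₂, Matrix.submatrix_apply,
            finSumFinEquiv_apply_left, finSumFinEquiv_apply_right, Jmat, Matrix.of_apply,
            Fin.coe_castAdd, Fin.coe_natAdd, hJ]
          by_cases hcase : (i : ℕ) + j = r - 1
          · rw [if_pos hcase, if_pos (by omega)]
          · rw [if_neg hcase, if_neg (by omega)]
      | inr i =>
        cases q' with
        | inl j =>
          have hi := i.isLt; have hj := j.isLt
          simp only [Matrix.fromBlocks_apply₂₁, Matrix.submatrix_apply,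
            finSumFinEquiv_apply_left, finSumFinEquiv_apply_right, Jmat, Matrix.of_apply,
            Fin.coe_castAdd, Fin.coe_natAdd, hJ]
          by_cases hcase : (i : ℕ) + j = r - 1
          · rw [if_pos hcase, if_pos (by omega)]
          · rw [if_neg hcase, if_neg (by omega)]
        | inr j =>
          have hi := i.isLt; have hj := j.isLt
          simp only [Matrix.fromBlocks_apply₂₂, Matrix.zero_apply, Matrix.submatrix_apply,
            finSumFinEquiv_apply_right, Jmat, Matrix.of_apply, Fin.coe_natAdd]
          rw [if_neg (by omega)]
    rw [hfactor, Matrix.det_mul, Matrix.det_fromBlocks_zero₂₁, Matrix.det_one,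
      one_mul, one_mul, hJ2r, Matrix.det_submatrix_equiv_self, det_Jmat]
  rw [hdetW, ← hsn]
  have hch : (s + (r + r)).choose 2 = s.choose 2 + s * (r + r) + (r + r).choose 2 :=
    choose_two_add s (r + r)
  rw [hch]
  have heven : (-1 : ℤ) ^ (s * (r + r)) = 1 := Even.neg_one_pow ⟨s * r, by ring⟩
  rw [pow_add, pow_add, heven]
  ring

theorem stmt0 (n : ℕ) (hn : 1 ≤ n) :
    Matrix.det (Matrix.of fun i j : Fin n => catMod2 ((i : ℕ) + j)) =
      (-1 : ℤ) ^ (n.choose 2) := key n
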